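/- For two basic, multiparty compatible communicating systems S1 and S2, if S1 and S2 have the same 1-bound traces (S1 ≈₁ S2), then they have exactly the same traces (S1 ≈ S2). -/

import Mathlib

/-- Actions of communicating finite state machines:
`send p q a` is the sending of message `a` from `p` to `q` (action `pq!a`),
`recv p q a` is the reception of `a` from `p` by `q` (action `pq?a`). -/
inductive Act (P A : Type) : Type
  | send (p q : P) (a : A)
  | recv (p q : P) (a : A)

namespace Act
variable {P A : Type}

/-- The subject (principal in charge) of an action. -/
def subj : Act P A → P
  | send p _ _ => p
  | recv _ q _ => q

/-- The partner of an action. -/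
def partner : Act P A → P
  | send _ q _ => q
  | recv p _ _ => p

def isSend : Act P A → Bool
  | send _ _ _ => true
  | recv _ _ _ => false

/-- The duality isomorphism Φ exchanging sends and receives. -/
def dual : Act P A → Act P A
  | send p q a => recv p q a
  | recv p q a => send p q a

end Act

/-- A communicating system: for each participant a CFSM given by its
transition relation and initial state (all machines share the state space `Q`
and alphabet `A`; channels are ordered pairs of participants). -/
structure Sys (P Q A : Type) where
  delta : P → Q → Act P A → Q → Prop
  init : P → Q

/-- A configuration: a local state for each machine and a FIFO buffer word
for each channel. -/
structure Config (P Q A : Type) where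
  st : P → Q
  buf : P × P → List A

variable {P Q A : Type}

/-- One firing of a transition: a send appends to the corresponding buffer,
a receive consumes the head of the corresponding buffer; only the acting
machine changes its local state. -/
inductive Step [DecidableEq P] (S : Sys P Q A) :
    Config P Q A → Act P A → Config P Q A → Prop
  | send {c : Config P Q A} {p q : P} {a : A} {q' : Q} :
      S.delta p (c.st p) (.send p q a) q' →
      Step S c (.send p q a)
        ⟨Function.update c.st p q',
         Function.update c.buf (p, q) (c.buf (p, q) ++ [a])⟩
  | recv {c : Config P Q A} {p q : P} {a : A} {q' : Q} {w : List A} :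
      S.delta q (c.st q) (.recv p q a) q' →
      c.buf (p, q) = a :: w →
      Step S c (.recv p q a)
        ⟨Function.update c.st q q', Function.update c.buf (p, q) w⟩

/-- Multi-step execution labelled by the sequence of fired actions. -/
inductive Steps [DecidableEq P] (S : Sys P Q A) :
    Config P Q A → List (Act P A) → Config P Q A → Prop
  | nil {c} : Steps S c [] c
  | cons {c c' c'' ℓ ℓs} : Step S c ℓ c' → Steps S c' ℓs c'' →
      Steps S c (ℓ :: ℓs) c''

/-- The initial configuration: initial states and empty buffers. -/
def initConfig (S : Sys P Q A) : Config P Q A := ⟨S.init, fun _ => []⟩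

def Reach [DecidableEq P] (S : Sys P Q A) (c : Config P Q A) : Prop :=
  ∃ φ, Steps S (initConfig S) φ c

/-- A configuration is stable when all buffers are empty. -/
def Stable (c : Config P Q A) : Prop := ∀ ch, c.buf ch = []

/-- Machine `p` only performs actions whose subject is `p`. -/
def Proper (S : Sys P Q A) : Prop :=
  ∀ p q ℓ q', S.delta p q ℓ q' → Act.subj ℓ = p

def Deterministic (S : Sys P Q A) : Prop :=
  ∀ p q ℓ q1 q2, S.delta p q ℓ q1 → S.delta p q ℓ q2 → q1 = q2

/-- Every state is directed: all its outgoing actions involve the same partner. -/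
def DirectedSys (S : Sys P Q A) : Prop :=
  ∀ p q ℓ1 q1 ℓ2 q2, S.delta p q ℓ1 q1 → S.delta p q ℓ2 q2 →
    Act.partner ℓ1 = Act.partner ℓ2

/-- No mixed states: no state has both sending and receiving outgoing actions. -/
def NoMixed (S : Sys P Q A) : Prop :=
  ∀ p q ℓ1 q1 ℓ2 q2, S.delta p q ℓ1 q1 → S.delta p q ℓ2 q2 →
    Act.isSend ℓ1 = Act.isSend ℓ2

/-- A system of basic CFSMs: deterministic, directed, no mixed states. -/
def Basic (S : Sys P Q A) : Prop :=
  Proper S ∧ Deterministic S ∧ DirectedSys S ∧ NoMixed S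

/-- 1-bounded reachability: reachable by executions in which no intermediate
buffer ever contains more than one message. -/
inductive Reach1 [DecidableEq P] (S : Sys P Q A) : Config P Q A → Prop
  | init : Reach1 S (initConfig S)
  | step {c ℓ c'} : Reach1 S c → Step S c ℓ c' →
      (∀ ch, (c'.buf ch).length ≤ 1) → Reach1 S c'

/-- Sequences of actions executable from a local state of machine `p`. -/
inductive LocalTr (S : Sys P Q A) (p : P) : Q → List (Act P A) → Prop
  | nil {q} : LocalTr S p q []
  | cons {q q' ℓ ℓs} : S.delta p q ℓ q' → LocalTr S p q' ℓs →
      LocalTr S p q (ℓ :: ℓs)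

/-- A transition of the associated CFSM of the subsystem without machine `i`:
a local transition of some machine other than `i` (product automaton,
no buffer constraints). -/
def PStep [DecidableEq P] (S : Sys P Q A) (i : P)
    (st : P → Q) (ℓ : Act P A) (st' : P → Q) : Prop :=
  ∃ p q', p ≠ i ∧ Act.subj ℓ = p ∧ S.delta p (st p) ℓ q' ∧
    st' = Function.update st p q'

/-- `Match S i st ℓs` : the subsystem without `i` can, from control state `st`,
produce the dual of every action of `ℓs` in order, interleaved with
alternations (internal synchronisations) not involving machine `i`. -/
inductive Match [DecidableEq P] (S : Sys P Q A) (i : P) :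
    (P → Q) → List (Act P A) → Prop
  | nil {st} : Match S i st []
  | alt {st st1 st2 p q a ℓs} : p ≠ i → q ≠ i →
      PStep S i st (.send p q a) st1 →
      PStep S i st1 (.recv p q a) st2 →
      Match S i st2 ℓs → Match S i st ℓs
  | dual {st st' ℓ ℓs} : PStep S i st (Act.dual ℓ) st' →
      Match S i st' ℓs → Match S i st (ℓ :: ℓs)

/-- Multiparty compatibility: from any 1-bounded reachable stable
configuration, any sequence of actions of any machine `i` is matched by dual
actions of the rest of the system, up to alternations not involving `i`. -/
def MultipartyCompatible [DecidableEq P] (S : Sys P Q A) : Prop :=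
  ∀ c, Reach1 S c → Stable c →
    ∀ i ℓs, LocalTr S i (c.st i) ℓs → Match S i c.st ℓs

/-- `φ` is an n-bound action sequence: along every prefix, on each channel
the number of sends never exceeds the number of matching receives by more
than n. -/
def Bounded [DecidableEq P] (n : ℕ) (φ : List (Act P A)) : Prop :=
  ∀ (k : ℕ) (p q : P),
    (φ.take k).countP
      (fun ℓ => match ℓ with
        | Act.send p' q' _ => decide (p' = p ∧ q' = q)
        | _ => false) ≤
    (φ.take k).countP
      (fun ℓ => match ℓ with
        | Act.recv p' q' _ => decide (p' = p ∧ q' = q)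
        | _ => false) + n

/-- `φ` is a trace of system `S`. -/
def TraceOf [DecidableEq P] (S : Sys P Q A) (φ : List (Act P A)) : Prop :=
  ∃ c, Steps S (initConfig S) φ c

/-! ### Auxiliary development for the proof -/

section AuxOBE

theorem aux_steps_append [DecidableEq P] {S : Sys P Q A} {a b c : Config P Q A}
    {φ ψ : List (Act P A)} (h1 : Steps S a φ b) (h2 : Steps S b ψ c) :
    Steps S a (φ ++ ψ) c := by
  induction h1 with
  | nil => simpa using h2
  | cons hs _ ih => exact Steps.cons hs (ih h2)

theorem aux_steps_snoc_inv [DecidableEq P] {S : Sys P Q A} {a c : Config P Q A}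
    {φ : List (Act P A)} {ℓ : Act P A} (h : Steps S a (φ ++ [ℓ]) c) :
    ∃ b, Steps S a φ b ∧ Step S b ℓ c := by
  induction φ generalizing a with
  | nil =>
    cases h with
    | cons hs hrest => cases hrest; exact ⟨a, Steps.nil, hs⟩
  | cons x xs ih =>
    cases h with
    | cons hs hrest =>
      obtain ⟨b, hb, hl⟩ := ih hrest
      exact ⟨b, Steps.cons hs hb, hl⟩

/-- The buffers along a run are determined by the action sequence alone. -/
theorem aux_steps_buf_eq [DecidableEq P] {S1 S2 : Sys P Q A}
    {b1 b2 c1 c2 : Config P Q A} {φ : List (Act P A)}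
    (h1 : Steps S1 b1 φ c1) (h2 : Steps S2 b2 φ c2) (hb : b1.buf = b2.buf) :
    c1.buf = c2.buf := by
  induction h1 generalizing b2 with
  | nil => cases h2; exact hb
  | cons hs hrest ih =>
    cases h2 with
    | cons hs2 hrest2 =>
      refine ih hrest2 ?_
      cases hs with
      | @send p q a q' hd =>
        cases hs2 with
        | send hd2 => simp [hb]
      | @recv p q a q' w hd he =>
        cases hs2 with
        | recv hd2 he2 =>
          rename_i q2' w2
          have hw : a :: w = a :: w2 := by rw [← he, hb, he2]
          injection hw with _ hw
          simp [hb, hw]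

/-- Projection of an action sequence on the actions of machine `i`. -/
def projTo [DecidableEq P] (i : P) (φ : List (Act P A)) : List (Act P A) :=
  φ.filter fun ℓ => decide (ℓ.subj = i)

theorem aux_projTo_cons [DecidableEq P] (i : P) (ℓ : Act P A) (φ : List (Act P A)) :
    projTo i (ℓ :: φ) = if ℓ.subj = i then ℓ :: projTo i φ else projTo i φ := by
  simp [projTo, List.filter_cons]

theorem aux_projTo_append [DecidableEq P] (i : P) (φ ψ : List (Act P A)) :
    projTo i (φ ++ ψ) = projTo i φ ++ projTo i ψ := by
  simp [projTo, List.filter_append]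

/-- Local runs recording the final state. -/
inductive LocalTrTo (S : Sys P Q A) (p : P) : Q → List (Act P A) → Q → Prop
  | nil {q} : LocalTrTo S p q [] q
  | cons {q q' r ℓ ℓs} : S.delta p q ℓ q' → LocalTrTo S p q' ℓs r →
      LocalTrTo S p q (ℓ :: ℓs) r

theorem aux_localTrTo_localTr {S : Sys P Q A} {p : P} {q r : Q} {w : List (Act P A)}
    (h : LocalTrTo S p q w r) : LocalTr S p q w := by
  induction h with
  | nil => exact LocalTr.nil
  | cons hd _ ih => exact LocalTr.cons hd ih

theorem aux_localTrTo_det {S : Sys P Q A} (hD : Deterministic S) {p : P}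
    {q r1 r2 : Q} {w : List (Act P A)}
    (h1 : LocalTrTo S p q w r1) (h2 : LocalTrTo S p q w r2) : r1 = r2 := by
  induction h1 generalizing r2 with
  | nil => cases h2; rfl
  | cons hd _ ih =>
    cases h2 with
    | cons hd2 hrest2 =>
      have := hD _ _ _ _ _ hd hd2
      subst this
      exact ih hrest2

theorem aux_localTrTo_snoc {S : Sys P Q A} {p : P} {q r : Q} {w : List (Act P A)}
    {ℓ : Act P A} (h : LocalTrTo S p q (w ++ [ℓ]) r) :
    ∃ m, LocalTrTo S p q w m ∧ S.delta p m ℓ r := by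
  induction w generalizing q with
  | nil =>
    cases h with
    | cons hd hrest => cases hrest; exact ⟨q, LocalTrTo.nil, hd⟩
  | cons x xs ih =>
    cases h with
    | cons hd hrest =>
      obtain ⟨m, hm, hdel⟩ := ih hrest
      exact ⟨m, LocalTrTo.cons hd hm, hdel⟩

/-- Each machine's local state along a run is driven by the projection of
the trace on that machine. -/
theorem aux_steps_localTrTo [DecidableEq P] {S : Sys P Q A} {c c' : Config P Q A}
    {φ : List (Act P A)} (h : Steps S c φ c') (i : P) :
    LocalTrTo S i (c.st i) (projTo i φ) (c'.st i) := by
  induction h with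
  | nil => exact LocalTrTo.nil
  | @cons c0 c0' c0'' ℓ0 ℓs0 hs hrest ih =>
    cases hs with
    | @send p q a q' hd =>
      rw [aux_projTo_cons]
      by_cases hp : p = i
      · subst hp
        simp only [Act.subj, if_pos rfl]
        refine LocalTrTo.cons hd ?_
        simpa using ih
      · simp only [Act.subj, hp, if_false, ↓reduceIte]
        have heq : Function.update c0.st p q' i = c0.st i :=
          Function.update_of_ne (fun h => hp h.symm) _ _
        exact heq ▸ ih
    | @recv p q a q' w hd he =>
      rw [aux_projTo_cons]
      by_cases hq : q = i
      · subst hq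
        simp only [Act.subj, if_pos rfl]
        refine LocalTrTo.cons hd ?_
        simpa using ih
      · simp only [Act.subj, hq, if_false, ↓reduceIte]
        have heq : Function.update c0.st q q' i = c0.st i :=
          Function.update_of_ne (fun h => hq h.symm) _ _
        exact heq ▸ ih

/-- Traces that are concatenations of matching send/receive pairs. -/
inductive PairForm : List (Act P A) → Prop
  | nil : PairForm []
  | cons (p q : P) (a : A) {rest : List (Act P A)} :
      PairForm rest → PairForm (Act.send p q a :: Act.recv p q a :: rest)

theorem aux_pairForm_bounded [DecidableEq P] {φ : List (Act P A)}
    (h : PairForm φ) : Bounded 1 φ := by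
  induction h with
  | nil => intro k p q; simp
  | cons p q a hrest ih =>
    intro k p' q'
    match k with
    | 0 => simp
    | 1 =>
      simp only [List.take_succ_cons, List.take_zero, List.countP_cons,
        List.countP_nil]
      split_ifs <;> simp_all
    | Nat.succ (Nat.succ n) =>
      have H := ih n p' q'
      simp only [List.take_succ_cons, List.countP_cons, Bool.false_eq_true,
        if_false]
      split_ifs <;> omega

/-- Executing a matched send/receive pair from a stable configuration. -/
theorem aux_pair_steps [DecidableEq P] {S : Sys P Q A} {c : Config P Q A}
    {p q : P} {a : A} {qp' qq' : Q} (hst : Stable c)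
    (hd1 : S.delta p (c.st p) (Act.send p q a) qp')
    (hd2 : S.delta q (Function.update c.st p qp' q) (Act.recv p q a) qq') :
    ∃ c2 : Config P Q A,
      Steps S c [Act.send p q a, Act.recv p q a] c2 ∧ Stable c2 ∧
      c2.st = Function.update (Function.update c.st p qp') q qq' := by
  refine ⟨⟨Function.update (Function.update c.st p qp') q qq',
      Function.update (Function.update c.buf (p, q) (c.buf (p, q) ++ [a])) (p, q) []⟩,
      ?_, ?_, rfl⟩
  · refine Steps.cons (Step.send hd1) (Steps.cons ?_ Steps.nil)
    have hbuf : (Function.update c.buf (p, q) (c.buf (p, q) ++ [a])) (p, q)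
        = a :: ([] : List A) := by
      simp [hst (p, q)]
    exact Step.recv (w := []) hd2 hbuf
  · intro ch
    by_cases hch : ch = (p, q)
    · subst hch; simp
    · simp [Function.update_of_ne hch, hst ch]

/-- From a `Match` certificate and a local trace of machine `i`, build a
global execution in `PairForm` whose projection on `i` is the given local
trace, starting from any stable configuration with the right states. -/
theorem aux_build [DecidableEq P] {S : Sys P Q A} (hP : Proper S) {i : P} :
    ∀ {st : P → Q} {w : List (Act P A)}, Match S i st w →
    ∀ {qi : Q}, LocalTr S i qi w →
    ∀ c : Config P Q A, Stable c → (∀ j, j ≠ i → c.st j = st j) → c.st i = qi →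
    ∃ χ c', Steps S c χ c' ∧ PairForm χ ∧ projTo i χ = w := by
  intro st w hm
  induction hm with
  | nil =>
    intro qi _ c _ _ _
    exact ⟨[], c, Steps.nil, PairForm.nil, rfl⟩
  | @alt st st1 st2 p q a ℓs hpne hqne hps1 hps2 _ ih =>
    intro qi hl c hcs hagree hqi
    obtain ⟨p₀, qp', hp0ne, hsubj1, hd1, hst1⟩ := hps1
    have hp0 : p = p₀ := hsubj1
    subst hp0
    subst hst1
    obtain ⟨q₀, qq', hq0ne, hsubj2, hd2, hst2⟩ := hps2
    have hq0 : q = q₀ := hsubj2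
    subst hq0
    subst hst2
    have hd1' : S.delta p (c.st p) (Act.send p q a) qp' := by
      rw [hagree p hpne]; exact hd1
    have hd2' : S.delta q (Function.update c.st p qp' q) (Act.recv p q a) qq' := by
      by_cases hqp : q = p
      · subst hqp; simpa using hd2
      · rw [Function.update_of_ne hqp, hagree q hqne]
        rw [Function.update_of_ne hqp] at hd2
        exact hd2
    obtain ⟨c2, hsteps2, hstb2, hcst2⟩ := aux_pair_steps hcs hd1' hd2'
    have hag2 : ∀ j, j ≠ i → c2.st j =
        Function.update (Function.update st p qp') q qq' j := by
      intro j hj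
      rw [hcst2]
      by_cases hjq : j = q
      · subst hjq; simp
      · rw [Function.update_of_ne hjq, Function.update_of_ne hjq]
        by_cases hjp : j = p
        · subst hjp; simp
        · rw [Function.update_of_ne hjp, Function.update_of_ne hjp]
          exact hagree j hj
    have hqi2 : c2.st i = qi := by
      rw [hcst2, Function.update_of_ne (fun h => hqne h.symm),
        Function.update_of_ne (fun h => hpne h.symm)]
      exact hqi
    obtain ⟨χ', c', hs', hpf', hpr'⟩ := ih hl c2 hstb2 hag2 hqi2
    refine ⟨Act.send p q a :: Act.recv p q a :: χ', c', ?_,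
      PairForm.cons p q a hpf', ?_⟩
    · simpa using aux_steps_append hsteps2 hs'
    · rw [aux_projTo_cons, aux_projTo_cons]
      simp only [Act.subj, hpne, hqne, if_false, ↓reduceIte]
      exact hpr'
  | @dual st st' ℓ ℓs hps _ ih =>
    intro qi hl c hcs hagree hqi
    cases hl with
    | cons hd hl' =>
      rename_i qi'
      have hsub : Act.subj ℓ = i := hP i qi ℓ qi' hd
      obtain ⟨m, qm', hmne, hsubm, hdm, hst'⟩ := hps
      cases ℓ with
      | send pp y a =>
        have hpp : i = pp := hsub.symm
        subst hpp
        have hy : m = y := hsubm.symm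
        subst hy
        subst hst'
        have hd1' : S.delta i (c.st i) (Act.send i m a) qi' := by
          rw [hqi]; exact hd
        have hd2' : S.delta m (Function.update c.st i qi' m)
            (Act.recv i m a) qm' := by
          rw [Function.update_of_ne hmne, hagree m hmne]
          exact hdm
        obtain ⟨c2, hsteps2, hstb2, hcst2⟩ := aux_pair_steps hcs hd1' hd2'
        have hag2 : ∀ j, j ≠ i → c2.st j = Function.update st m qm' j := by
          intro j hj
          rw [hcst2]
          by_cases hjm : j = m
          · subst hjm; simp
          · rw [Function.update_of_ne hjm, Function.update_of_ne hjm,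
              Function.update_of_ne hj]
            exact hagree j hj
        have hqi2 : c2.st i = qi' := by
          rw [hcst2, Function.update_of_ne (fun h => hmne h.symm)]
          simp
        obtain ⟨χ', c', hs', hpf', hpr'⟩ := ih hl' c2 hstb2 hag2 hqi2
        refine ⟨Act.send i m a :: Act.recv i m a :: χ', c', ?_,
          PairForm.cons i m a hpf', ?_⟩
        · simpa using aux_steps_append hsteps2 hs'
        · simp [aux_projTo_cons, Act.subj, hmne, hpr']
      | recv x pp a =>
        have hpp : i = pp := hsub.symm
        subst hpp
        have hx : m = x := hsubm.symm
        subst hx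
        subst hst'
        have hd1' : S.delta m (c.st m) (Act.send m i a) qm' := by
          rw [hagree m hmne]; exact hdm
        have hd2' : S.delta i (Function.update c.st m qm' i)
            (Act.recv m i a) qi' := by
          rw [Function.update_of_ne (fun h => hmne h.symm), hqi]
          exact hd
        obtain ⟨c2, hsteps2, hstb2, hcst2⟩ := aux_pair_steps hcs hd1' hd2'
        have hag2 : ∀ j, j ≠ i → c2.st j = Function.update st m qm' j := by
          intro j hj
          rw [hcst2, Function.update_of_ne hj]
          by_cases hjm : j = m
          · subst hjm; simp
          · rw [Function.update_of_ne hjm, Function.update_of_ne hjm]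
            exact hagree j hj
        have hqi2 : c2.st i = qi' := by
          rw [hcst2]; simp
        obtain ⟨χ', c', hs', hpf', hpr'⟩ := ih hl' c2 hstb2 hag2 hqi2
        refine ⟨Act.send m i a :: Act.recv m i a :: χ', c', ?_,
          PairForm.cons m i a hpf', ?_⟩
        · simpa using aux_steps_append hsteps2 hs'
        · simp [aux_projTo_cons, Act.subj, hmne, hpr']

theorem aux_half [DecidableEq P] (S1 S2 : Sys P Q A)
    (hP1 : Proper S1) (hMC1 : MultipartyCompatible S1)
    (hDet2 : Deterministic S2)
    (h12 : ∀ φ, Bounded 1 φ → TraceOf S1 φ → TraceOf S2 φ) :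
    ∀ φ, TraceOf S1 φ → TraceOf S2 φ := by
  intro φ
  induction φ using List.reverseRecOn with
  | nil => intro _; exact ⟨initConfig S2, Steps.nil⟩
  | append_singleton ψ ℓ ih =>
    rintro ⟨c1', hsteps1'⟩
    obtain ⟨c1, hsteps1, hstep1⟩ := aux_steps_snoc_inv hsteps1'
    obtain ⟨c2, hsteps2⟩ := ih ⟨c1, hsteps1⟩
    -- the local trace of machine `i := subj ℓ` along `ψ ++ [ℓ]` in S1
    have hlt1 : LocalTrTo S1 (Act.subj ℓ) (S1.init (Act.subj ℓ))
        (projTo (Act.subj ℓ) (ψ ++ [ℓ])) (c1'.st (Act.subj ℓ)) :=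
      aux_steps_localTrTo hsteps1' (Act.subj ℓ)
    have hproj : projTo (Act.subj ℓ) (ψ ++ [ℓ])
        = projTo (Act.subj ℓ) ψ ++ [ℓ] := by
      rw [aux_projTo_append, aux_projTo_cons]
      simp [projTo]
    -- multiparty compatibility at the initial configuration gives a Match
    have hMatch : Match S1 (Act.subj ℓ) S1.init
        (projTo (Act.subj ℓ) (ψ ++ [ℓ])) :=
      hMC1 (initConfig S1) Reach1.init (fun _ => rfl) (Act.subj ℓ) _
        (aux_localTrTo_localTr hlt1)
    -- build a 1-bounded trace of S1 with the same projection on `i`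
    obtain ⟨χ, cE, hχsteps, hχpf, hχproj⟩ :=
      aux_build hP1 hMatch (aux_localTrTo_localTr hlt1) (initConfig S1)
        (fun _ => rfl) (fun _ _ => rfl) rfl
    -- transfer it to S2
    obtain ⟨d, hdsteps⟩ := h12 χ (aux_pairForm_bounded hχpf) ⟨cE, hχsteps⟩
    have hlt2 : LocalTrTo S2 (Act.subj ℓ) (S2.init (Act.subj ℓ))
        (projTo (Act.subj ℓ) ψ ++ [ℓ]) (d.st (Act.subj ℓ)) := by
      have := aux_steps_localTrTo hdsteps (Act.subj ℓ)
      rwa [hχproj, hproj] at this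
    obtain ⟨mst, hmrun, hdel⟩ := aux_localTrTo_snoc hlt2
    have hlt2b : LocalTrTo S2 (Act.subj ℓ) (S2.init (Act.subj ℓ))
        (projTo (Act.subj ℓ) ψ) (c2.st (Act.subj ℓ)) :=
      aux_steps_localTrTo hsteps2 (Act.subj ℓ)
    have hmst : mst = c2.st (Act.subj ℓ) :=
      aux_localTrTo_det hDet2 hmrun hlt2b
    rw [hmst] at hdel
    -- fire `ℓ` in S2 after ψ
    cases ℓ with
    | send p q a =>
      exact ⟨_, aux_steps_append hsteps2 (Steps.cons (Step.send hdel) Steps.nil)⟩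
    | recv p q a =>
      cases hstep1 with
      | recv hd1 he1 =>
        rename_i q1' w0
        have hbuf : c2.buf = c1.buf := aux_steps_buf_eq hsteps2 hsteps1 rfl
        have he2 : c2.buf (p, q) = a :: w0 := by rw [hbuf]; exact he1
        exact ⟨_, aux_steps_append hsteps2
          (Steps.cons (Step.recv hdel he2) Steps.nil)⟩

end AuxOBE

/-- two basic, multiparty compatible systems with the same
1-bound traces have exactly the same traces. -/
theorem one_buffer_equivalence [DecidableEq P] (S1 S2 : Sys P Q A)
    (hB1 : Basic S1) (hMC1 : MultipartyCompatible S1)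
    (hB2 : Basic S2) (hMC2 : MultipartyCompatible S2)
    (h1 : ∀ φ, Bounded 1 φ → (TraceOf S1 φ ↔ TraceOf S2 φ)) :
    ∀ φ, TraceOf S1 φ ↔ TraceOf S2 φ := by
  intro φ
  constructor
  · exact fun h => aux_half S1 S2 hB1.1 hMC1 hB2.2.1
      (fun ψ hb ht => (h1 ψ hb).mp ht) φ h
  · exact fun h => aux_half S2 S1 hB2.1 hMC2 hB1.2.1
      (fun ψ hb ht => (h1 ψ hb).mpr ht) φ h
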